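/- If an instance (G,D,Δ) of the periodic upper-bounded temporal tree realization problem with a tree G is a yes-instance, then it has a solution λ such that for every degree-2 vertex v of G with neighbors u and w, λ({u,v}) ≠ λ({v,w}). -/

import Mathlib

def tdelay (Δ a b : ℤ) : ℤ := if a < b then b - a else b - a + Δ

def listDelay {V : Type*} (Δ : ℤ) (lab : V → V → ℤ) : List V → ℤ
  | a :: b :: c :: rest => tdelay Δ (lab a b) (lab b c) + listDelay Δ lab (b :: c :: rest)
  | _ => 0

def Realizes {V : Type*} (G : SimpleGraph V) (Δ : ℤ) (lab : V → V → ℤ)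
    (D : V → V → ℤ) : Prop :=
  ∀ s t (p : G.Walk s t), p.IsPath → 1 + listDelay Δ lab p.support ≤ D s t

namespace AltAux

open SimpleGraph Walk

/-! ### Arithmetic lemmas -/

def cshift (Δ s a : ℤ) : ℤ := (a + s - 1) % Δ + 1

lemma cshift_mem {Δ : ℤ} (hΔ : 0 < Δ) (s a : ℤ) : cshift Δ s a ∈ Set.Icc 1 Δ := by
  unfold cshift
  constructor
  · have := Int.emod_nonneg (a + s - 1) (by omega : Δ ≠ 0); omega
  · have := Int.emod_lt_of_pos (a + s - 1) hΔ; omega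

lemma tdelay_le {Δ a b : ℤ} (ha : a ∈ Set.Icc 1 Δ) (hb : b ∈ Set.Icc 1 Δ) :
    tdelay Δ a b ≤ Δ := by
  obtain ⟨ha1, ha2⟩ := ha; obtain ⟨hb1, hb2⟩ := hb
  unfold tdelay; split <;> omega

lemma tdelay_eq {Δ a b : ℤ} (hΔ : 0 < Δ) (ha : a ∈ Set.Icc 1 Δ) (hb : b ∈ Set.Icc 1 Δ) :
    tdelay Δ a b = (b - a - 1) % Δ + 1 := by
  obtain ⟨ha1, ha2⟩ := ha; obtain ⟨hb1, hb2⟩ := hb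
  unfold tdelay; split
  · rw [Int.emod_eq_of_lt (by omega) (by omega)]; omega
  · have h1 : (b - a - 1) % Δ = (b - a - 1 + Δ) % Δ := by
      simpa using (Int.add_mul_emod_self_left (b - a - 1) Δ 1).symm
    rw [h1, Int.emod_eq_of_lt (by omega) (by omega)]; omega

lemma mod_sub_sub (Δ x y : ℤ) : (x % Δ - y % Δ - 1) % Δ = (x - y - 1) % Δ := by
  have hx : (x % Δ) % Δ = x % Δ := Int.emod_emod_of_dvd x dvd_rfl
  have hy : (y % Δ) % Δ = y % Δ := Int.emod_emod_of_dvd y dvd_rfl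
  have h1 : x % Δ ≡ x [ZMOD Δ] := hx
  have h2 : y % Δ ≡ y [ZMOD Δ] := hy
  exact (h1.sub h2).sub (Int.ModEq.refl 1)

lemma tdelay_cshift {Δ a b : ℤ} (hΔ : 0 < Δ) (s : ℤ) (ha : a ∈ Set.Icc 1 Δ)
    (hb : b ∈ Set.Icc 1 Δ) :
    tdelay Δ (cshift Δ s a) (cshift Δ s b) = tdelay Δ a b := by
  rw [tdelay_eq hΔ (cshift_mem hΔ s a) (cshift_mem hΔ s b), tdelay_eq hΔ ha hb]
  have : (cshift Δ s b - cshift Δ s a - 1) % Δ = (b - a - 1) % Δ := by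
    unfold cshift
    have h : (b + s - 1) % Δ + 1 - ((a + s - 1) % Δ + 1) - 1
        = (b + s - 1) % Δ - (a + s - 1) % Δ - 1 := by ring
    rw [h, mod_sub_sub]
    congr 1; ring
  rw [this]

lemma dvd_of_cshift_eq {Δ s t a b : ℤ} (h : cshift Δ s a = cshift Δ t b) :
    Δ ∣ (a + s) - (b + t) := by
  unfold cshift at h
  have h2 : (a + s - 1) % Δ = (b + t - 1) % Δ := by omega
  have h3 : (a + s - 1) ≡ (b + t - 1) [ZMOD Δ] := h2
  have := h3.dvd
  have h4 : (a + s) - (b + t) = -((b + t - 1) - (a + s - 1)) := by ring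
  rw [h4]
  exact dvd_neg.mpr this

lemma cshift_inj {Δ s a b : ℤ} (hΔ : 0 < Δ) (ha : a ∈ Set.Icc 1 Δ) (hb : b ∈ Set.Icc 1 Δ)
    (h : cshift Δ s a = cshift Δ s b) : a = b := by
  have hd := dvd_of_cshift_eq h
  have : (a + s) - (b + s) = a - b := by ring
  rw [this] at hd
  have := Int.eq_zero_of_abs_lt_dvd hd (by
    obtain ⟨ha1, ha2⟩ := ha; obtain ⟨hb1, hb2⟩ := hb
    rw [abs_lt]; omega)
  omega

lemma cshift_ne {Δ s t a : ℤ} (hΔ : 2 ≤ Δ) (hst : s - t = 1 ∨ t - s = 1) :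
    cshift Δ s a ≠ cshift Δ t a := by
  intro h
  have hd := dvd_of_cshift_eq h
  have : (a + s) - (a + t) = s - t := by ring
  rw [this] at hd
  have := Int.eq_zero_of_abs_lt_dvd hd (by rw [abs_lt]; omega)
  omega

/-! ### Tree lemmas -/

variable {V : Type*} {G : SimpleGraph V}

noncomputable def pth (hT : G.IsTree) (r x : V) : G.Walk r x :=
  (hT.existsUnique_path r x).exists.choose

lemma pth_isPath (hT : G.IsTree) (r x : V) : (pth hT r x).IsPath :=
  (hT.existsUnique_path r x).exists.choose_spec

lemma pth_unique (hT : G.IsTree) {r x : V} (q : G.Walk r x) (hq : q.IsPath) :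
    q = pth hT r x :=
  (hT.existsUnique_path r x).unique hq (pth_isPath hT r x)

lemma pth_nil (hT : G.IsTree) (r : V) : pth hT r r = Walk.nil :=
  (pth_unique hT Walk.nil (Walk.IsPath.nil)).symm ▸ rfl

lemma pth_support_self (hT : G.IsTree) (r : V) : (pth hT r r).support = [r] := by
  rw [← pth_unique hT Walk.nil (Walk.IsPath.nil)]; rfl

lemma pth_edge (hT : G.IsTree) {r x : V} (h : G.Adj r x) :
    pth hT r x = Walk.cons h Walk.nil := by
  refine (pth_unique hT _ ?_).symm
  rw [Walk.isPath_def]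
  simp [h.ne]

lemma pth_takeUntil [DecidableEq V] (hT : G.IsTree) {r x y : V} (hy : y ∈ (pth hT r x).support) :
    pth hT r y = (pth hT r x).takeUntil y hy :=
  (pth_unique hT _ ((pth_isPath hT r x).takeUntil hy)).symm

lemma pth_concat [DecidableEq V] (hT : G.IsTree) {r x y : V} (h : G.Adj y x)
    (hy : y ∈ (pth hT r x).support) :
    pth hT r x = (pth hT r y).concat h := by
  have hdrop : (pth hT r x).dropUntil y hy = Walk.cons h Walk.nil := by
    have h1 : ((pth hT r x).dropUntil y hy).IsPath := (pth_isPath hT r x).dropUntil hy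
    have h2 : (Walk.cons h Walk.nil : G.Walk y x).IsPath := by
      rw [Walk.isPath_def]; simp [h.ne]
    exact (hT.existsUnique_path y x).unique h1 h2
  calc pth hT r x
      = ((pth hT r x).takeUntil y hy).append ((pth hT r x).dropUntil y hy) :=
        (Walk.take_spec _ hy).symm
    _ = (pth hT r y).append (Walk.cons h Walk.nil) := by rw [hdrop, ← pth_takeUntil]
    _ = (pth hT r y).concat h := rfl

lemma pth_support_parent [DecidableEq V] (hT : G.IsTree) {r x y : V} (h : G.Adj y x)
    (hy : y ∈ (pth hT r x).support) :
    (pth hT r x).support = (pth hT r y).support ++ [x] := by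
  rw [pth_concat hT h hy, Walk.support_concat]

lemma not_mem_parent [DecidableEq V] (hT : G.IsTree) {r x y : V} (h : G.Adj y x)
    (hy : y ∈ (pth hT r x).support) : x ∉ (pth hT r y).support := by
  have hnd := (pth_isPath hT r x).support_nodup
  rw [pth_support_parent hT h hy] at hnd
  intro hx
  exact (List.disjoint_of_nodup_append hnd) hx (by simp)

lemma pth_dichotomy (hT : G.IsTree) (r : V) {x y : V} (h : G.Adj x y) :
    y ∈ (pth hT r x).support ∨ x ∈ (pth hT r y).support := by
  by_cases hy : y ∈ (pth hT r x).support
  · exact Or.inl hy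
  · right
    have hp : ((pth hT r x).concat h).IsPath := by
      rw [Walk.isPath_def, Walk.support_concat]
      exact List.Nodup.append (pth_isPath hT r x).support_nodup (by simp)
        (by intro a ha hb; simp at hb; subst hb; exact hy ha)
    have := pth_unique hT _ hp
    rw [← this, Walk.support_concat]
    simp [Walk.end_mem_support]

lemma pth_excl [DecidableEq V] (hT : G.IsTree) {r x y : V} (h : G.Adj y x)
    (hy : y ∈ (pth hT r x).support) : x ∉ (pth hT r y).support :=
  not_mem_parent hT h hy

lemma parent_unique [DecidableEq V] (hT : G.IsTree) {r b a c : V} (ha : G.Adj a b) (hc : G.Adj c b)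
    (ha' : a ∈ (pth hT r b).support) (hc' : c ∈ (pth hT r b).support) : a = c := by
  have h1 : (pth hT r b).support = (pth hT r a).support ++ [b] :=
    pth_support_parent hT ha ha'
  have h2 : (pth hT r b).support = (pth hT r c).support ++ [b] :=
    pth_support_parent hT hc hc'
  have h3 : (pth hT r a).support = (pth hT r c).support := by
    have := h1.symm.trans h2
    exact List.append_inj_left' this rfl
  have ga : (pth hT r a).support.getLast (Walk.support_ne_nil _) = a :=
    Walk.getLast_support _
  have gc : (pth hT r c).support.getLast (Walk.support_ne_nil _) = c :=
    Walk.getLast_support _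
  rw [← ga, ← gc]
  congr 1


/-! ### The shift construction -/

attribute [local instance 2000] Classical.propDecidable

def Bad (G : SimpleGraph V) (lab : V → V → ℤ) (v : V) : Prop :=
  ∃ u w, G.Adj v u ∧ G.Adj v w ∧ u ≠ w ∧ (∀ x, G.Adj v x → x = u ∨ x = w) ∧ lab v u = lab v w

lemma Bad_pair {lab : V → V → ℤ} {b a c : V} (hB : Bad G lab b) (ha : G.Adj b a)
    (hc : G.Adj b c) (hac : a ≠ c) : lab b a = lab b c := by
  obtain ⟨u, w, hu, hw, huw, hcov, heq⟩ := hB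
  rcases hcov a ha with rfl | rfl <;> rcases hcov c hc with rfl | rfl
  · exact absurd rfl hac
  · exact heq
  · exact heq.symm
  · exact absurd rfl hac

noncomputable def cRt (G : SimpleGraph V) (lab : V → V → ℤ) (r : V) : V :=
  if h : Bad G lab r then h.choose else r

lemma cRt_adj {lab : V → V → ℤ} {r : V} (hr : Bad G lab r) : G.Adj r (cRt G lab r) := by
  rw [cRt, dif_pos hr]
  exact hr.choose_spec.choose_spec.1

noncomputable def Sh (G : SimpleGraph V) (hT : G.IsTree) (lab : V → V → ℤ) (r x : V) : ℤ :=
  ({v : V | v ∈ (pth hT r x).support ∧ Bad G lab v ∧ v ≠ r ∧ v ≠ x}.ncard : ℤ)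
  + (if Bad G lab r ∧ cRt G lab r ∈ (pth hT r x).support then 1 else 0)

noncomputable def sEdge (G : SimpleGraph V) (hT : G.IsTree) (lab : V → V → ℤ)
    (r x y : V) : ℤ :=
  if y ∈ (pth hT r x).support then Sh G hT lab r x else Sh G hT lab r y

lemma ncard_step (G : SimpleGraph V) (lab : V → V → ℤ) {L : List V} {r b : V} (hb : b ∈ L) :
    {v | v ∈ L ∧ Bad G lab v ∧ v ≠ r}.ncard
      = {v | v ∈ L ∧ Bad G lab v ∧ v ≠ r ∧ v ≠ b}.ncard
        + (if Bad G lab b ∧ b ≠ r then 1 else 0) := by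
  have hfin : {v | v ∈ L ∧ Bad G lab v ∧ v ≠ r ∧ v ≠ b}.Finite :=
    (List.finite_toSet L).subset (fun v hv => hv.1)
  by_cases h : Bad G lab b ∧ b ≠ r
  · rw [if_pos h]
    have hset : {v | v ∈ L ∧ Bad G lab v ∧ v ≠ r}
        = insert b {v | v ∈ L ∧ Bad G lab v ∧ v ≠ r ∧ v ≠ b} := by
      ext v
      simp only [Set.mem_setOf_eq, Set.mem_insert_iff]
      constructor
      · rintro ⟨h1, h2, h3⟩
        by_cases hv : v = b
        · exact Or.inl hv
        · exact Or.inr ⟨h1, h2, h3, hv⟩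
      · rintro (rfl | ⟨h1, h2, h3, _⟩)
        · exact ⟨hb, h.1, h.2⟩
        · exact ⟨h1, h2, h3⟩
    rw [hset, Set.ncard_insert_of_notMem (by simp) hfin]
  · rw [if_neg h, add_zero]
    congr 1
    ext v
    simp only [Set.mem_setOf_eq]
    constructor
    · rintro ⟨h1, h2, h3⟩
      refine ⟨h1, h2, h3, fun hvb => h (hvb ▸ ⟨h2, h3⟩)⟩
    · rintro ⟨h1, h2, h3, _⟩
      exact ⟨h1, h2, h3⟩

lemma Sh_parent {lab : V → V → ℤ} (hT : G.IsTree) {r a b : V} (h : G.Adj b a)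
    (hb : b ∈ (pth hT r a).support) :
    Sh G hT lab r a = Sh G hT lab r b
      + (if Bad G lab b ∧ b ≠ r then 1 else 0)
      + (if Bad G lab r ∧ cRt G lab r = a then 1 else 0) := by
  have hsupp : (pth hT r a).support = (pth hT r b).support ++ [a] :=
    pth_support_parent hT h hb
  have hnm : a ∉ (pth hT r b).support := not_mem_parent hT h hb
  have e1 : {v : V | v ∈ (pth hT r a).support ∧ Bad G lab v ∧ v ≠ r ∧ v ≠ a}
      = {v : V | v ∈ (pth hT r b).support ∧ Bad G lab v ∧ v ≠ r} := by
    ext v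
    rw [hsupp]
    simp only [Set.mem_setOf_eq, List.mem_append, List.mem_singleton]
    constructor
    · rintro ⟨h1 | rfl, h2, h3, h4⟩
      · exact ⟨h1, h2, h3⟩
      · exact absurd rfl h4
    · rintro ⟨h1, h2, h3⟩
      exact ⟨Or.inl h1, h2, h3, fun hva => hnm (hva ▸ h1)⟩
  have hstep := ncard_step G lab (L := (pth hT r b).support) (r := r) (b := b)
    (Walk.end_mem_support _)
  have ht : (if Bad G lab r ∧ cRt G lab r ∈ (pth hT r a).support then 1 else 0 : ℤ)
      = (if Bad G lab r ∧ cRt G lab r ∈ (pth hT r b).support then 1 else 0)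
        + (if Bad G lab r ∧ cRt G lab r = a then 1 else 0) := by
    by_cases hBr : Bad G lab r
    · by_cases hca : cRt G lab r = a
      · have hcb : cRt G lab r ∉ (pth hT r b).support := hca ▸ hnm
        have hca' : cRt G lab r ∈ (pth hT r a).support := hca ▸ Walk.end_mem_support _
        rw [if_pos ⟨hBr, hca'⟩, if_neg (fun hc => hcb hc.2), if_pos ⟨hBr, hca⟩]
        ring
      · have hmem : cRt G lab r ∈ (pth hT r a).support
            ↔ cRt G lab r ∈ (pth hT r b).support := by
          rw [hsupp]
          simp [hca]
        by_cases hcb : cRt G lab r ∈ (pth hT r b).support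
        · rw [if_pos ⟨hBr, hmem.mpr hcb⟩, if_pos ⟨hBr, hcb⟩, if_neg (fun hc => hca hc.2)]
          ring
        · rw [if_neg (fun hc => hcb (hmem.mp hc.2)), if_neg (fun hc => hcb hc.2),
            if_neg (fun hc => hca hc.2)]
          ring
    · rw [if_neg (fun hc => hBr hc.1), if_neg (fun hc => hBr hc.1),
        if_neg (fun hc => hBr hc.1)]
      ring
  unfold Sh
  rw [e1, hstep, ht]
  push_cast
  ring

/-! ### More structural lemmas -/

lemma exists_parent (hT : G.IsTree) {r v : V} (hvr : v ≠ r) :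
    ∃ z, G.Adj z v ∧ z ∈ (pth hT r v).support := by
  have hnn : ¬ (pth hT r v).reverse.Nil := Walk.not_nil_of_ne hvr
  obtain ⟨z, hadj, q, hq⟩ := Walk.not_nil_iff.mp hnn
  refine ⟨z, hadj.symm, ?_⟩
  have hz : z ∈ (pth hT r v).reverse.support := by
    rw [hq, Walk.support_cons]
    exact List.mem_cons_of_mem _ q.start_mem_support
  rw [Walk.support_reverse, List.mem_reverse] at hz
  exact hz

lemma cR_parent_eq_root {lab : V → V → ℤ} (hT : G.IsTree) {r a b : V}
    (hBr : Bad G lab r) (hc : cRt G lab r = a) (hab : G.Adj b a)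
    (hb : b ∈ (pth hT r a).support) : b = r := by
  have hra : G.Adj r a := hc ▸ cRt_adj hBr
  rw [pth_edge hT hra, Walk.support_cons, Walk.support_nil, List.mem_cons,
    List.mem_singleton] at hb
  rcases hb with rfl | rfl
  · rfl
  · exact absurd rfl hab.ne

lemma sEdge_symm {lab : V → V → ℤ} (hT : G.IsTree) (r : V) {x y : V} (h : G.Adj x y) :
    sEdge G hT lab r x y = sEdge G hT lab r y x := by
  unfold sEdge
  by_cases h1 : y ∈ (pth hT r x).support
  · have h2 : x ∉ (pth hT r y).support := pth_excl hT h.symm h1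
    rw [if_pos h1, if_neg h2]
  · have h2 : x ∈ (pth hT r y).support := (pth_dichotomy hT r h).resolve_left h1
    rw [if_neg h1, if_pos h2]

lemma sEdge_triple {lab : V → V → ℤ} (hT : G.IsTree) (r : V)
    (hsym : ∀ x y, lab x y = lab y x) {a b c : V}
    (hab : G.Adj a b) (hbc : G.Adj b c) (hac : a ≠ c) :
    sEdge G hT lab r a b = sEdge G hT lab r b c ∨ lab a b = lab b c := by
  by_cases h1 : b ∈ (pth hT r a).support
  · by_cases h2 : b ∈ (pth hT r c).support
    · -- b is the parent of both a and c
      have hanb : a ∉ (pth hT r b).support := pth_excl hT hab.symm h1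
      have hcnb : c ∉ (pth hT r b).support := pth_excl hT hbc h2
      have hpa := Sh_parent (lab := lab) hT hab.symm h1
      have hpc := Sh_parent (lab := lab) hT hbc h2
      by_cases hga : Bad G lab r ∧ cRt G lab r = a
      · right
        have hb_eq : b = r := cR_parent_eq_root hT hga.1 hga.2 hab.symm h1
        have hBb : Bad G lab b := hb_eq ▸ hga.1
        rw [hsym a b]
        exact Bad_pair hBb hab.symm hbc hac
      · by_cases hgc : Bad G lab r ∧ cRt G lab r = c
        · right
          have hb_eq : b = r := cR_parent_eq_root hT hgc.1 hgc.2 hbc h2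
          have hBb : Bad G lab b := hb_eq ▸ hgc.1
          rw [hsym a b]
          exact Bad_pair hBb hab.symm hbc hac
        · left
          unfold sEdge
          rw [if_pos h1, if_neg hcnb, hpa, hpc, if_neg hga, if_neg hgc]
    · -- b is the parent of a, c is the parent of b
      have hcb : c ∈ (pth hT r b).support := (pth_dichotomy hT r hbc).resolve_right h2
      by_cases hBb : Bad G lab b
      · right
        rw [hsym a b]
        exact Bad_pair hBb hab.symm hbc hac
      · left
        unfold sEdge
        rw [if_pos h1, if_pos hcb]
        have hpa := Sh_parent (lab := lab) hT hab.symm h1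
        have e2 : (if Bad G lab b ∧ b ≠ r then (1:ℤ) else 0) = 0 :=
          if_neg (fun hc => hBb hc.1)
        have e3 : (if Bad G lab r ∧ cRt G lab r = a then (1:ℤ) else 0) = 0 := by
          apply if_neg
          rintro ⟨hBr, hca⟩
          have hbr : b = r := cR_parent_eq_root hT hBr hca hab.symm h1
          subst hbr
          rw [pth_support_self] at hcb
          have : c = b := by simpa using hcb
          exact hbc.ne this.symm
        rw [hpa, e2, e3]
        ring
  · by_cases h2 : b ∈ (pth hT r c).support
    · -- a is the parent of b, b is the parent of c
      have hba : a ∈ (pth hT r b).support := (pth_dichotomy hT r hab).resolve_left h1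
      have hcnb : c ∉ (pth hT r b).support := pth_excl hT hbc h2
      by_cases hBb : Bad G lab b
      · right
        rw [hsym a b]
        exact Bad_pair hBb hab.symm hbc hac
      · left
        unfold sEdge
        rw [if_neg h1, if_neg hcnb]
        have hpc := Sh_parent (lab := lab) hT hbc h2
        have e2 : (if Bad G lab b ∧ b ≠ r then (1:ℤ) else 0) = 0 :=
          if_neg (fun hc => hBb hc.1)
        have e3 : (if Bad G lab r ∧ cRt G lab r = c then (1:ℤ) else 0) = 0 := by
          apply if_neg
          rintro ⟨hBr, hcc⟩
          have hbr : b = r := cR_parent_eq_root hT hBr hcc hbc h2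
          subst hbr
          rw [pth_support_self] at hba
          have : a = b := by simpa using hba
          exact hab.ne this
        rw [hpc, e2, e3]
        ring
    · -- both a and c are parents of b : impossible
      have hba : a ∈ (pth hT r b).support := (pth_dichotomy hT r hab).resolve_left h1
      have hcb : c ∈ (pth hT r b).support := (pth_dichotomy hT r hbc.symm).resolve_left h2
      exact absurd (parent_unique hT hab hbc.symm hba hcb) hac

lemma sEdge_deg2 {lab : V → V → ℤ} (hT : G.IsTree) (r : V) {v u w : V}
    (hvu : G.Adj v u) (hvw : G.Adj v w) (huw : u ≠ w)
    (hdeg : ∀ x, G.Adj v x → x = u ∨ x = w) :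
    (lab v u = lab v w →
      sEdge G hT lab r v u - sEdge G hT lab r v w = 1 ∨
      sEdge G hT lab r v w - sEdge G hT lab r v u = 1) ∧
    (lab v u ≠ lab v w → sEdge G hT lab r v u = sEdge G hT lab r v w) := by
  by_cases hvr : v = r
  · subst hvr
    -- v is the root: u and w are both children
    have hu : u ∉ (pth hT v v).support := by
      rw [pth_support_self]
      simp [hvu.ne']
    have hw : w ∉ (pth hT v v).support := by
      rw [pth_support_self]
      simp [hvw.ne']
    have hsu : sEdge G hT lab v v u = Sh G hT lab v u := by
      unfold sEdge; rw [if_neg hu]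
    have hsw : sEdge G hT lab v v w = Sh G hT lab v w := by
      unfold sEdge; rw [if_neg hw]
    have hpu := Sh_parent (lab := lab) hT hvu (Walk.start_mem_support _)
    have hpw := Sh_parent (lab := lab) hT hvw (Walk.start_mem_support _)
    have ev : (if Bad G lab v ∧ v ≠ v then (1:ℤ) else 0) = 0 := by simp
    constructor
    · intro heq
      have hBv : Bad G lab v := ⟨u, w, hvu, hvw, huw, hdeg, heq⟩
      have hcadj : G.Adj v (cRt G lab v) := cRt_adj hBv
      rcases hdeg _ hcadj with hcu | hcw
      · left
        rw [hsu, hsw, hpu, hpw, ev, if_pos ⟨hBv, hcu⟩,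
          if_neg (fun hc => huw (hcu ▸ hc.2))]
        ring
      · right
        rw [hsu, hsw, hpu, hpw, ev, if_pos ⟨hBv, hcw⟩,
          if_neg (fun hc => huw (hcw ▸ hc.2).symm)]
        ring
    · intro hne
      have hBv : ¬ Bad G lab v := fun hB => hne (Bad_pair hB hvu hvw huw)
      rw [hsu, hsw, hpu, hpw, ev, if_neg (fun hc => hBv hc.1),
        if_neg (fun hc => hBv hc.1)]
  · -- v is not the root; exactly one of u, w is the parent of v
    obtain ⟨z, hzv, hz⟩ := exists_parent hT hvr
    have hBv_iff : ∀ heq : lab v u = lab v w, Bad G lab v :=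
      fun heq => ⟨u, w, hvu, hvw, huw, hdeg, heq⟩
    -- helper for the oriented case
    have key : ∀ u' w' : V, G.Adj v u' → G.Adj v w' → u' ≠ w' →
        u' ∈ (pth hT r v).support → w' ∉ (pth hT r v).support →
        (∀ x, G.Adj v x → x = u' ∨ x = w') →
        sEdge G hT lab r v w' = sEdge G hT lab r v u'
          + (if Bad G lab v then (1:ℤ) else 0) := by
      intro u' w' hvu' hvw' hune hupar hwnot hdeg'
      have hvsw : v ∈ (pth hT r w').support :=
        (pth_dichotomy hT r hvw').resolve_left hwnot
      have hsu : sEdge G hT lab r v u' = Sh G hT lab r v := by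
        unfold sEdge; rw [if_pos hupar]
      have hsw : sEdge G hT lab r v w' = Sh G hT lab r w' := by
        unfold sEdge; rw [if_neg hwnot]
      have hp := Sh_parent (lab := lab) hT hvw' hvsw
      have e3 : (if Bad G lab r ∧ cRt G lab r = w' then (1:ℤ) else 0) = 0 := by
        apply if_neg
        rintro ⟨hBr, hcw⟩
        exact hvr (cR_parent_eq_root hT hBr hcw hvw' hvsw)
      have e2 : (if Bad G lab v ∧ v ≠ r then (1:ℤ) else 0)
          = (if Bad G lab v then (1:ℤ) else 0) := by
        by_cases hB : Bad G lab v
        · rw [if_pos ⟨hB, hvr⟩, if_pos hB]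
        · rw [if_neg (fun hc => hB hc.1), if_neg hB]
      rw [hsu, hsw, hp, e2, e3]
      ring
    rcases hdeg z hzv.symm with rfl | rfl
    · -- z = u is the parent
      have hwnot : w ∉ (pth hT r v).support := by
        intro hw
        exact huw (parent_unique hT hzv hvw.symm hz hw)
      have hk := key z w hvu hvw huw hz hwnot hdeg
      constructor
      · intro heq
        right
        rw [hk, if_pos (hBv_iff heq)]
        ring
      · intro hne
        rw [hk, if_neg (fun hB => hne (Bad_pair hB hvu hvw huw))]
        ring
    · -- z = w is the parent
      have hunot : u ∉ (pth hT r v).support := by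
        intro hu
        exact huw (parent_unique hT hvu.symm hzv hu hz)
      have hk := key z u hvw hvu (Ne.symm huw) hz hunot
        (fun x hx => (hdeg x hx).symm)
      constructor
      · intro heq
        left
        rw [hk, if_pos (hBv_iff heq)]
        ring
      · intro hne
        rw [hk, if_neg (fun hB => hne (Bad_pair hB hvu hvw huw))]
        ring

/-! ### The new labeling -/

noncomputable def newlab (G : SimpleGraph V) (hT : G.IsTree) (Δ : ℤ) (lab : V → V → ℤ)
    (r x y : V) : ℤ :=
  if G.Adj x y then cshift Δ (sEdge G hT lab r x y) (lab x y) else lab x y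

lemma newlab_symm (hT : G.IsTree) (Δ : ℤ) (lab : V → V → ℤ) (r : V)
    (hsym : ∀ x y, lab x y = lab y x) :
    ∀ x y, newlab G hT Δ lab r x y = newlab G hT Δ lab r y x := by
  intro x y
  unfold newlab
  by_cases h : G.Adj x y
  · rw [if_pos h, if_pos h.symm, sEdge_symm hT r h, hsym]
  · rw [if_neg h, if_neg (fun h' => h h'.symm), hsym]

lemma newlab_mem (hT : G.IsTree) {Δ : ℤ} (hΔ : 0 < Δ) (lab : V → V → ℤ) (r : V)
    {x y : V} (h : G.Adj x y) : newlab G hT Δ lab r x y ∈ Set.Icc 1 Δ := by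
  unfold newlab
  rw [if_pos h]
  exact cshift_mem hΔ _ _

lemma tdelay_newlab_le (hT : G.IsTree) (r : V) {Δ : ℤ} (hΔ : 0 < Δ) {lab : V → V → ℤ}
    (hsym : ∀ x y, lab x y = lab y x) (hIcc : ∀ x y, G.Adj x y → lab x y ∈ Set.Icc 1 Δ)
    {a b c : V} (hab : G.Adj a b) (hbc : G.Adj b c) (hac : a ≠ c) :
    tdelay Δ (newlab G hT Δ lab r a b) (newlab G hT Δ lab r b c)
      ≤ tdelay Δ (lab a b) (lab b c) := by
  unfold newlab
  rw [if_pos hab, if_pos hbc]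
  rcases sEdge_triple hT r hsym hab hbc hac with he | he
  · rw [he, tdelay_cshift hΔ _ (hIcc _ _ hab) (hIcc _ _ hbc)]
  · have hdd : tdelay Δ (lab a b) (lab b c) = Δ := by
      rw [he]
      unfold tdelay
      rw [if_neg (lt_irrefl _)]
      ring
    rw [hdd]
    exact tdelay_le (cshift_mem hΔ _ _) (cshift_mem hΔ _ _)

lemma listDelay_newlab_le (hT : G.IsTree) (r : V) {Δ : ℤ} (hΔ : 0 < Δ) {lab : V → V → ℤ}
    (hsym : ∀ x y, lab x y = lab y x) (hIcc : ∀ x y, G.Adj x y → lab x y ∈ Set.Icc 1 Δ) :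
    ∀ {x y : V} (p : G.Walk x y), p.IsPath →
      listDelay Δ (newlab G hT Δ lab r) p.support ≤ listDelay Δ lab p.support := by
  intro x y p
  induction p with
  | nil => intro _; exact le_refl _
  | @cons u v y h q ih =>
    intro hp
    cases q with
    | nil => exact le_refl _
    | @cons v c y h' q' =>
      have hp' : (Walk.cons h' q').IsPath := hp.of_cons
      have hih := ih hp'
      have hu : u ∉ (Walk.cons h' q').support := ((Walk.cons_isPath_iff h _).mp hp).2
      have hac : u ≠ c := by
        intro heq
        apply hu
        rw [Walk.support_cons, heq]
        exact List.mem_cons_of_mem _ q'.start_mem_support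
      obtain ⟨t, ht⟩ : ∃ t, q'.support = c :: t := ⟨q'.support.tail, q'.support_eq_cons⟩
      rw [Walk.support_cons, Walk.support_cons, ht]
      rw [Walk.support_cons, ht] at hih
      exact add_le_add (tdelay_newlab_le hT r hΔ hsym hIcc h h' hac) hih

theorem main (hT : G.IsTree) (Δ : ℤ) (hΔ : 2 ≤ Δ) (D : V → V → ℤ)
    (hD : ∀ i j, 1 ≤ D i j)
    (hyes : ∃ lab : V → V → ℤ, (∀ x y, lab x y = lab y x) ∧
      (∀ x y, G.Adj x y → lab x y ∈ Set.Icc 1 Δ) ∧ Realizes G Δ lab D) :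
    ∃ lab : V → V → ℤ, (∀ x y, lab x y = lab y x) ∧
      (∀ x y, G.Adj x y → lab x y ∈ Set.Icc 1 Δ) ∧ Realizes G Δ lab D ∧
      ∀ v u w : V, G.Adj v u → G.Adj v w → u ≠ w →
        (∀ x, G.Adj v x → x = u ∨ x = w) → lab v u ≠ lab v w := by
  obtain ⟨lab, hsym, hIcc, hreal⟩ := hyes
  by_cases hV : Nonempty V
  · obtain ⟨r⟩ := hV
    have h0 : (0:ℤ) < Δ := by linarith
    refine ⟨newlab G hT Δ lab r, newlab_symm hT Δ lab r hsym,
      fun x y h => newlab_mem hT h0 lab r h, ?_, ?_⟩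
    · intro s t p hp
      have h1 := listDelay_newlab_le hT r h0 hsym hIcc p hp
      have h2 := hreal s t p hp
      linarith
    · intro v u w hvu hvw huw hdeg
      have hkey := sEdge_deg2 (lab := lab) hT r hvu hvw huw hdeg
      unfold newlab
      rw [if_pos hvu, if_pos hvw]
      by_cases heq : lab v u = lab v w
      · rw [heq]
        exact cshift_ne hΔ (hkey.1 heq)
      · rw [hkey.2 heq]
        intro hcc
        exact heq (cshift_inj h0 (hIcc _ _ hvu) (hIcc _ _ hvw) hcc)
  · exact ⟨lab, hsym, hIcc, hreal, fun v => absurd ⟨v⟩ hV⟩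

end AltAux

/-- if a TTR instance `(G, D, Δ)` on a tree `G` is a yes-instance, then it has a
solution `lab` giving different labels to the two edges at every degree-2 vertex. -/
theorem yes_instance_has_alternating_solution {V : Type*} (G : SimpleGraph V)
    (hT : G.IsTree) (Δ : ℤ) (hΔ : 2 ≤ Δ) (D : V → V → ℤ) (hD : ∀ i j, 1 ≤ D i j)
    (hyes : ∃ lab : V → V → ℤ, (∀ x y, lab x y = lab y x) ∧
      (∀ x y, G.Adj x y → lab x y ∈ Set.Icc 1 Δ) ∧ Realizes G Δ lab D) :
    ∃ lab : V → V → ℤ, (∀ x y, lab x y = lab y x) ∧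
      (∀ x y, G.Adj x y → lab x y ∈ Set.Icc 1 Δ) ∧ Realizes G Δ lab D ∧
      ∀ v u w : V, G.Adj v u → G.Adj v w → u ≠ w →
        (∀ x, G.Adj v x → x = u ∨ x = w) → lab v u ≠ lab v w :=
  AltAux.main hT Δ hΔ D hD hyes
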